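/- For every integer n ≥ 0, the product of Lucastorials {n}!·{n+1}! divides {2n}! in the polynomial ring ℤ[s,t]; equivalently, the Lucas-Catalan number C_{n} = {2n}!/({n}!·{n+1}!) is a polynomial in s and t. -/

import Mathlib

open MvPolynomial

/-- The generalized Lucas polynomials in ℤ[s,t] (s = X 0, t = X 1):
{0} = 0, {1} = 1, {n} = s·{n-1} + t·{n-2}. -/
noncomputable def lucas : ℕ → MvPolynomial (Fin 2) ℤ
  | 0 => 0
  | 1 => 1
  | n + 2 => X 0 * lucas (n + 1) + X 1 * lucas n

/-- The Lucastorial {n}! = {n}·{n-1}⋯{2}·{1}, with {0}! = 1. -/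
noncomputable def lucasFact : ℕ → MvPolynomial (Fin 2) ℤ
  | 0 => 1
  | n + 1 => lucas (n + 1) * lucasFact n

lemma lucas_two_step (k : ℕ) : lucas (k + 2) = X 0 * lucas (k + 1) + X 1 * lucas k := rfl

lemma lucasFact_succ (k : ℕ) : lucasFact (k + 1) = lucas (k + 1) * lucasFact k := rfl

lemma lucas_add (m : ℕ) : ∀ k, lucas (m + k + 1) =
    lucas (k + 1) * lucas (m + 1) + X 1 * lucas k * lucas m
  | 0 => by simp [lucas]
  | 1 => by
      have : m + 1 + 1 = m + 2 := rfl
      simp only [this, lucas]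
      ring
  | (k+2) => by
      have h1 := lucas_add m (k+1)
      have h2 := lucas_add m k
      have e : m + (k+2) + 1 = (m + k + 1) + 2 := by omega
      rw [e, lucas_two_step, show m + k + 1 + 1 = m + (k+1) + 1 from by omega, h1, h2,
        show k + 2 + 1 = (k+1) + 2 from rfl, lucas_two_step (k+1), lucas_two_step k]
      ring

/-- `{k}!·{m-k}! ∣ {m}!` for `k ≤ m`. -/
lemma lucasFact_dvd_lucasFact : ∀ m : ℕ, ∀ k ≤ m, lucasFact k * lucasFact (m - k) ∣ lucasFact m := by
  intro m
  induction m with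
  | zero => intro k hk; interval_cases k; simp [lucasFact]
  | succ m ih =>
    intro k hk
    rcases Nat.eq_zero_or_pos k with rfl | hk0
    · simp [lucasFact]
    rcases eq_or_lt_of_le hk with rfl | hklt
    · simp [Nat.sub_self, lucasFact]
    have hkm : k ≤ m := by omega
    obtain ⟨k', rfl⟩ : ∃ k', k = k' + 1 := ⟨k - 1, by omega⟩
    -- addition formula: {m+1} = {k+1}{m-k+1} + t·{k}·{m-k}
    have hadd := lucas_add (m - (k' + 1)) (k' + 1)
    rw [show m - (k' + 1) + (k' + 1) + 1 = m + 1 from by omega] at hadd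
    have hsub : m + 1 - (k' + 1) = (m - (k' + 1)) + 1 := by omega
    rw [show lucasFact (m + 1) = lucas (m + 1) * lucasFact m from rfl, hadd, add_mul, hsub,
      lucasFact_succ (m - (k' + 1))]
    apply dvd_add
    · -- term {k+1+1}·{m-k+1}·{m}!
      have h := ih (k' + 1) hkm
      calc lucasFact (k' + 1) * (lucas (m - (k' + 1) + 1) * lucasFact (m - (k' + 1)))
          = lucas (m - (k' + 1) + 1) * (lucasFact (k' + 1) * lucasFact (m - (k' + 1))) := by ring
        _ ∣ lucas (m - (k' + 1) + 1) * lucasFact m := mul_dvd_mul_left _ h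
        _ ∣ lucas (k' + 1 + 1) * lucas (m - (k' + 1) + 1) * lucasFact m := ⟨lucas (k' + 1 + 1), by ring⟩
    · -- term t·{k}·{m-k}·{m}!
      have h := ih k' (by omega)
      have hmk : m - k' = (m - (k' + 1)) + 1 := by omega
      rw [hmk, lucasFact_succ] at h
      calc lucasFact (k' + 1) * (lucas (m - (k' + 1) + 1) * lucasFact (m - (k' + 1)))
          = lucas (k' + 1) * (lucasFact k' * (lucas (m - (k' + 1) + 1) * lucasFact (m - (k' + 1)))) := by
            rw [lucasFact_succ]; ring
        _ ∣ lucas (k' + 1) * lucasFact m := mul_dvd_mul_left _ h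
        _ ∣ X 1 * lucas (k' + 1) * lucas (m - (k' + 1)) * lucasFact m :=
            ⟨X 1 * lucas (m - (k' + 1)), by ring⟩

/-- Squared Catalan-type identity. -/
lemma lucas_catalan_sq : ∀ n : ℕ,
    (lucas (n + 2) * lucas n - lucas (n + 1) ^ 2) ^ 2 = (X 1) ^ (2 * n)
  | 0 => by simp [lucas]
  | (n+1) => by
      have ih := lucas_catalan_sq n
      rw [show n + 1 + 2 = (n + 1) + 2 from rfl, lucas_two_step (n+1), lucas_two_step n]
      have : 2 * (n + 1) = 2 * n + 2 := by ring
      rw [this, pow_add]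
      rw [lucas_two_step n] at ih
      linear_combination (X 1 : MvPolynomial (Fin 2) ℤ) ^ 2 * ih



lemma prime_t : Prime (X 1 : MvPolynomial (Fin 2) ℤ) := by
  rw [← MulEquiv.prime_iff ((renameEquiv ℤ (Equiv.swap (0 : Fin 2) 1)).trans
    (finSuccEquiv ℤ 1)).toMulEquiv]
  have : ((renameEquiv ℤ (Equiv.swap (0 : Fin 2) 1)).trans
      (finSuccEquiv ℤ 1)).toMulEquiv (X 1) = Polynomial.X := by
    simp [finSuccEquiv_X_zero]
  rw [this]
  exact Polynomial.prime_X

noncomputable def killT : MvPolynomial (Fin 2) ℤ →ₐ[ℤ] Polynomial ℤ :=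
  aeval (fun i : Fin 2 => if i = 0 then Polynomial.X else 0)

lemma killT_X0 : killT (X 0) = Polynomial.X := by simp [killT]

lemma killT_X1 : killT (X 1) = 0 := by
  simp only [killT, aeval_X]
  norm_num

lemma killT_lucas : ∀ k : ℕ, killT (lucas (k + 1)) = Polynomial.X ^ k
  | 0 => by simp [lucas, killT]
  | 1 => by
      rw [show (1:ℕ) + 1 = 0 + 2 from rfl, lucas_two_step 0, map_add, map_mul, map_mul,
        killT_X0, killT_X1]
      simp [lucas]
  | (k+2) => by
      have h1 := killT_lucas (k+1)
      have h2 := killT_lucas k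
      rw [show k + 2 + 1 = (k + 1) + 2 from rfl, lucas_two_step (k+1), map_add, map_mul,
        map_mul, killT_X0, killT_X1, h1, h2]
      ring

lemma not_t_dvd_lucas (k : ℕ) : ¬ (X 1 : MvPolynomial (Fin 2) ℤ) ∣ lucas (k + 1) := by
  rintro ⟨c, hc⟩
  have := killT_lucas k
  rw [hc, map_mul, killT_X1, zero_mul] at this
  exact pow_ne_zero k Polynomial.X_ne_zero this.symm

lemma not_t_dvd_lucasFact (n : ℕ) : ¬ (X 1 : MvPolynomial (Fin 2) ℤ) ∣ lucasFact n := by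
  induction n with
  | zero => intro h; exact prime_t.not_unit (isUnit_of_dvd_one h)
  | succ n ih =>
    rw [lucasFact_succ]
    intro h
    rcases (prime_t.dvd_mul).1 h with h' | h'
    · exact not_t_dvd_lucas n h'
    · exact ih h'

lemma strip_t {D M : MvPolynomial (Fin 2) ℤ} (hD : ¬ (X 1 : MvPolynomial (Fin 2) ℤ) ∣ D) :
    ∀ k : ℕ, D ∣ (X 1) ^ k * M → D ∣ M := by
  intro k
  induction k with
  | zero => simp
  | succ k ih =>
    rintro ⟨E, hE⟩
    have ht : (X 1 : MvPolynomial (Fin 2) ℤ) ∣ D * E :=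
      ⟨(X 1) ^ k * M, by rw [← hE]; ring⟩
    rcases (prime_t.dvd_mul).1 ht with h' | h'
    · exact absurd h' hD
    obtain ⟨E', rfl⟩ := h'
    apply ih
    refine ⟨E', mul_left_cancel₀ (X_ne_zero (R := ℤ) (1 : Fin 2)) ?_⟩
    rw [show (X 1 : MvPolynomial (Fin 2) ℤ) * ((X 1) ^ k * M) = (X 1) ^ (k+1) * M by ring, hE]
    ring

/-- For every n ≥ 0, {n}!·{n+1}! divides {2n}! in ℤ[s,t]; i.e. the Lucas-Catalan number
C_n = {2n}!/({n}!·{n+1}!) is a polynomial in s and t. -/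
theorem lucasFact_mul_lucasFact_dvd (n : ℕ) :
    lucasFact n * lucasFact (n + 1) ∣ lucasFact (2 * n) := by
  rcases n with _ | m
  · simp [lucasFact, lucas]
  -- n = m + 1
  have hA := lucasFact_dvd_lucasFact (2 * (m + 1)) (m + 1) (by omega)
  rw [show 2 * (m + 1) - (m + 1) = m + 1 from by omega] at hA
  have hB := lucasFact_dvd_lucasFact (2 * (m + 1)) (m + 2) (by omega)
  rw [show 2 * (m + 1) - (m + 2) = m from by omega] at hB
  obtain ⟨P, hP⟩ := hA
  obtain ⟨Q, hQ⟩ := hB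
  have hid := lucas_catalan_sq m
  set F := lucasFact (2 * (m + 1)) with hF
  have e1 : lucasFact (m + 1) = lucas (m + 1) * lucasFact m := rfl
  have e2 : lucasFact (m + 2) = lucas (m + 2) * lucasFact (m + 1) := rfl
  have h1 : lucas (m + 2) * F = (lucasFact (m + 1) * lucasFact (m + 2)) * P := by
    linear_combination lucas (m + 2) * hP - (lucasFact (m + 1) * P) * e2
  have h2 : lucas (m + 1) * F = (lucasFact (m + 1) * lucasFact (m + 2)) * Q := by
    linear_combination lucas (m + 1) * hQ - (lucasFact (m + 2) * Q) * e1
  have key : (lucasFact (m + 1) * lucasFact (m + 2)) ∣ (X 1) ^ (2 * m) * F := by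
    refine ⟨lucas m ^ 2 * lucas (m + 2) * P - 2 * lucas m * lucas (m + 1) ^ 2 * P
      + lucas (m + 1) ^ 3 * Q, ?_⟩
    linear_combination (-F) * hid + (lucas m ^ 2 * lucas (m + 2)
      - 2 * lucas m * lucas (m + 1) ^ 2) * h1 + lucas (m + 1) ^ 3 * h2
  have hD : ¬ (X 1 : MvPolynomial (Fin 2) ℤ) ∣ lucasFact (m + 1) * lucasFact (m + 2) := by
    intro h
    rcases (prime_t.dvd_mul).1 h with h' | h'
    · exact not_t_dvd_lucasFact (m + 1) h'
    · exact not_t_dvd_lucasFact (m + 2) h'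
  exact strip_t hD (2 * m) key
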